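/- Under Assumptions A1–A7 (with AXR) and range(T) = Λ, let λ ∈ Λ* be the solution of (I − X^⊤ S) λ = d and let γ > 0 be a constant with ‖(I − X^⊤ S) μ‖_{M^{-1}} ≥ γ ‖μ‖_{M^{-1}} for all μ ∈ Λ*. Then for any damping parameter β ∈ (0, 1), the Robin–Schwarz iterates converge linearly: ‖λ^(n+1) − λ‖_{M^{-1}} ≤ ρ ‖λ^(n) − λ‖_{M^{-1}} with ρ := √(1 − β(1 − β)γ²) < 1, hence ‖λ^(n) − λ‖_{M^{-1}} ≤ ρⁿ ‖λ^(0) − λ‖_{M^{-1}}; moreover there is a constant C such that ‖u^(n) − R û‖_U ≤ C ρⁿ ‖λ^(0) − λ‖_{M^{-1}}, where û is the unique solution of Â û = f̂. -/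

import Mathlib

/-- The transpose (dual map) `B^⊤ : Y* → X*` of a bounded linear operator `B : X → Y`. -/
noncomputable def trOp {X Y : Type*} [NormedAddCommGroup X] [NormedSpace ℂ X]
    [NormedAddCommGroup Y] [NormedSpace ℂ Y] (B : X →L[ℂ] Y) :
    (Y →L[ℂ] ℂ) →L[ℂ] (X →L[ℂ] ℂ) :=
  (ContinuousLinearMap.compL ℂ X Y ℂ).flip B

/-- `B` (an operator into the dual) is *real-valued* with respect to the conjugation `cU`:
`⟨B v̄, w⟩ = conj ⟨B v, w̄⟩`. -/
def IsRealForm {U : Type*} [NormedAddCommGroup U] [NormedSpace ℂ U]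
    (cU : U →SL[starRingEnd ℂ] U) (B : U →L[ℂ] (U →L[ℂ] ℂ)) : Prop :=
  ∀ v w, B (cU v) w = star (B v (cU w))

/-- `B` is *symmetric*: `⟨B v, w⟩ = ⟨B w, v⟩` (bilinear duality pairing). -/
def IsSymForm {U : Type*} [NormedAddCommGroup U] [NormedSpace ℂ U]
    (B : U →L[ℂ] (U →L[ℂ] ℂ)) : Prop :=
  ∀ v w, B v w = B w v

/-- `B` is *non-negative*: `⟨B v, v̄⟩ ≥ 0` (in particular real). -/
def IsNonnegForm {U : Type*} [NormedAddCommGroup U] [NormedSpace ℂ U]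
    (cU : U →SL[starRingEnd ℂ] U) (B : U →L[ℂ] (U →L[ℂ] ℂ)) : Prop :=
  ∀ v, (B v (cU v)).im = 0 ∧ 0 ≤ (B v (cU v)).re

/-- real-valued, symmetric and non-negative operator. -/
def IsRealSymNonneg {U : Type*} [NormedAddCommGroup U] [NormedSpace ℂ U]
    (cU : U →SL[starRingEnd ℂ] U) (B : U →L[ℂ] (U →L[ℂ] ℂ)) : Prop :=
  IsRealForm cU B ∧ IsSymForm B ∧ IsNonnegForm cU B

/-- **Assumption A7**: either the coercive case (`α = 1`, `A` real, symmetric, non-negative)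
or the wave propagation case (`α = i`, `A = A₀ + i A₁ − A₂` with real, symmetric,
non-negative parts). -/
def AssumptionA7 {U : Type*} [NormedAddCommGroup U] [NormedSpace ℂ U]
    (α : ℂ) (cU : U →SL[starRingEnd ℂ] U) (A : U →L[ℂ] (U →L[ℂ] ℂ)) : Prop :=
  (α = 1 ∧ IsRealSymNonneg cU A) ∨
  (α = Complex.I ∧ ∃ A0 A1 A2 : U →L[ℂ] (U →L[ℂ] ℂ),
    A = A0 + Complex.I • A1 - A2 ∧
    IsRealSymNonneg cU A0 ∧ IsRealSymNonneg cU A1 ∧ IsRealSymNonneg cU A2)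

/-- The squared `M`-norm `‖l‖²_M = ⟨M l, l̄⟩` on `Λ`. -/
noncomputable def sqM {Lam : Type*} [NormedAddCommGroup Lam] [NormedSpace ℂ Lam]
    (cL : Lam →SL[starRingEnd ℂ] Lam) (M : Lam →L[ℂ] (Lam →L[ℂ] ℂ)) (l : Lam) : ℝ :=
  (M l (cL l)).re

/-- The squared `M⁻¹`-norm `‖μ‖²_{M⁻¹} = ⟨M⁻¹ μ, μ̄⟩` on `Λ*` (here `Minv = M⁻¹`). -/
noncomputable def sqMinv {Lam : Type*} [NormedAddCommGroup Lam] [NormedSpace ℂ Lam]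
    (cL : Lam →SL[starRingEnd ℂ] Lam) (Minv : (Lam →L[ℂ] ℂ) →L[ℂ] Lam)
    (μ : Lam →L[ℂ] ℂ) : ℝ :=
  (μ (cL (Minv μ))).re

/-- The scattering operator in its simplified form (valid under A4),
`S = −I + 2α M T Ã⁻¹ T^⊤`, with `Atinv = Ã⁻¹ = (A + α T^⊤ M T)⁻¹`. -/
noncomputable def scatOp {U Lam : Type*}
    [NormedAddCommGroup U] [NormedSpace ℂ U] [NormedAddCommGroup Lam] [NormedSpace ℂ Lam]
    (T : U →L[ℂ] Lam) (M : Lam →L[ℂ] (Lam →L[ℂ] ℂ))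
    (Atinv : (U →L[ℂ] ℂ) →L[ℂ] U) (α : ℂ) :
    (Lam →L[ℂ] ℂ) →L[ℂ] (Lam →L[ℂ] ℂ) :=
  -(ContinuousLinearMap.id ℂ (Lam →L[ℂ] ℂ)) +
    (2 * α) • ((M.comp T).comp (Atinv.comp (trOp T)))

section Helpers

lemma trOp_apply {X Y : Type*} [NormedAddCommGroup X] [NormedSpace ℂ X]
    [NormedAddCommGroup Y] [NormedSpace ℂ Y] (B : X →L[ℂ] Y) (μ : Y →L[ℂ] ℂ) (v : X) :
    trOp B μ v = μ (B v) := rfl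

variable {Lam : Type*} [NormedAddCommGroup Lam] [NormedSpace ℂ Lam]
  (cL : Lam →SL[starRingEnd ℂ] Lam) (M : Lam →L[ℂ] (Lam →L[ℂ] ℂ))
  (Minv : (Lam →L[ℂ] ℂ) →L[ℂ] Lam)

lemma sqMinv_eq (hMinv_r : ∀ μ : Lam →L[ℂ] ℂ, M (Minv μ) = μ) (μ : Lam →L[ℂ] ℂ) :
    sqMinv cL Minv μ = (M (Minv μ) (cL (Minv μ))).re := by
  unfold sqMinv
  rw [hMinv_r]

lemma sqMinv_nonneg (cM : ℝ)
    (hMlow : ∀ l : Lam, (M l (cL l)).im = 0 ∧ cM * ‖l‖ ^ 2 ≤ (M l (cL l)).re)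
    (hcM : 0 ≤ cM)
    (hMinv_r : ∀ μ : Lam →L[ℂ] ℂ, M (Minv μ) = μ) (μ : Lam →L[ℂ] ℂ) :
    0 ≤ sqMinv cL Minv μ := by
  rw [sqMinv_eq cL M Minv hMinv_r]
  exact le_trans (by positivity) ((hMlow _).2)

end Helpers

section H2
variable {Lam : Type*} [NormedAddCommGroup Lam] [NormedSpace ℂ Lam]
  (cL : Lam →SL[starRingEnd ℂ] Lam) (Minv : (Lam →L[ℂ] ℂ) →L[ℂ] Lam)

set_option maxRecDepth 100000 in
lemma sqMinv_convex (β : ℝ) (x y : Lam →L[ℂ] ℂ) :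
    sqMinv cL Minv ((((1-β : ℝ)) : ℂ) • x + ((β : ℝ) : ℂ) • y)
      = (1-β) * sqMinv cL Minv x + β * sqMinv cL Minv y
        - β*(1-β)*(sqMinv cL Minv (x - y)) := by
  unfold sqMinv
  simp only [map_add, map_sub, map_smulₛₗ, map_smul, ContinuousLinearMap.add_apply,
    ContinuousLinearMap.sub_apply, ContinuousLinearMap.smul_apply, RingHom.id_apply,
    Complex.conj_ofReal, smul_eq_mul]
  simp only [Complex.add_re, Complex.sub_re, Complex.mul_re, Complex.ofReal_re,
    Complex.ofReal_im]
  ring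
end H2

set_option maxHeartbeats 1000000 in
set_option synthInstance.maxHeartbeats 200000 in
lemma S_contract {U Lam : Type*} [NormedAddCommGroup U] [NormedSpace ℂ U]
    [NormedAddCommGroup Lam] [NormedSpace ℂ Lam]
    (cU : U →SL[starRingEnd ℂ] U) (cL : Lam →SL[starRingEnd ℂ] Lam)
    (T : U →L[ℂ] Lam)
    (hTreal : ∀ v, T (cU v) = cL (T v))
    (A : U →L[ℂ] (U →L[ℂ] ℂ)) (α : ℂ)
    (M : Lam →L[ℂ] (Lam →L[ℂ] ℂ))
    (hMreal : IsRealForm cL M) (hMsym : IsSymForm M)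
    (cM : ℝ) (hcM : 0 ≤ cM)
    (hMlow : ∀ l : Lam, (M l (cL l)).im = 0 ∧ cM * ‖l‖ ^ 2 ≤ (M l (cL l)).re)
    (Minv : (Lam →L[ℂ] ℂ) →L[ℂ] Lam)
    (hMinv_l : ∀ l, Minv (M l) = l) (hMinv_r : ∀ μ, M (Minv μ) = μ)
    (Atinv : (U →L[ℂ] ℂ) →L[ℂ] U)
    (hAt_r : ∀ g : U →L[ℂ] ℂ, (A + α • ((trOp T).comp (M.comp T))) (Atinv g) = g)
    (hA7 : AssumptionA7 α cU A)
    (μ : Lam →L[ℂ] ℂ) :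
    sqMinv cL Minv (scatOp T M Atinv α μ) ≤ sqMinv cL Minv μ := by
  have ha : Minv μ = Minv μ := rfl
  set a := Minv μ with ha
  set w := Atinv (trOp T μ) with hw
  set b := -a + (2*α) • T w with hb
  have hSapp : scatOp T M Atinv α μ = M b := by
    have h1 : scatOp T M Atinv α μ = -μ + (2*α) • M (T w) := by
      rw [scatOp]
      rw [ContinuousLinearMap.add_apply, ContinuousLinearMap.neg_apply,
        ContinuousLinearMap.smul_apply]
      rfl
    rw [h1, hb, map_add, map_neg, map_smul, hMinv_r]
  have hminvS : Minv (scatOp T M Atinv α μ) = b := by rw [hSapp, hMinv_l]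
  set c : ℂ := A w (cU w) with hc
  set ε : ℂ := M (T w) (cL (T w)) with hε
  have hε_im : ε.im = 0 := (hMlow (T w)).1
  have hε_re : 0 ≤ ε.re := le_trans (by positivity) (hMlow (T w)).2
  have hεstar : (starRingEnd ℂ) ε = ε := Complex.conj_eq_iff_im.mpr hε_im
  -- the energy identity from the definition of w
  have hdag : M a (cL (T w)) = c + α * ε := by
    have h := congrArg (fun g : U →L[ℂ] ℂ => g (cU w)) (hAt_r (trOp T μ))
    simp only [ContinuousLinearMap.add_apply, ContinuousLinearMap.smul_apply,
      ContinuousLinearMap.comp_apply, smul_eq_mul, trOp_apply] at h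
    rw [← hw, hTreal w] at h
    have hμ : μ (cL (T w)) = M a (cL (T w)) := by
      conv_lhs => rw [← hMinv_r μ]
    rw [hμ] at h
    rw [hc, hε, ← h]
  have hcross : M (T w) (cL a) = starRingEnd ℂ (c + α * ε) := by
    rw [hMsym (T w) (cL a), hMreal a (T w), hdag]; rfl
  -- expansion of the quadratic form
  have hexp : M b (cL b) = M a (cL a) - (starRingEnd ℂ (2*α)) * (M a (cL (T w)))
      - (2*α) * (M (T w) (cL a)) + (2*α) * (starRingEnd ℂ (2*α)) * ε := by
    rw [hb]
    simp only [map_add, map_neg, map_smulₛₗ, map_smul, ContinuousLinearMap.add_apply,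
      ContinuousLinearMap.neg_apply, ContinuousLinearMap.smul_apply, smul_eq_mul,
      RingHom.id_apply, ← hε]
    ring
  have hfin : M b (cL b) = M a (cL a)
      - 2 * ((starRingEnd ℂ α) * c + α * (starRingEnd ℂ c)) := by
    rw [hexp, hdag, hcross]
    have hsum : starRingEnd ℂ (c + α * ε) = starRingEnd ℂ c + (starRingEnd ℂ α) * ε := by
      rw [map_add, map_mul, hεstar]
    have h2 : (starRingEnd ℂ) (2*α) = 2 * (starRingEnd ℂ) α := by
      rw [map_mul, Complex.conj_ofNat]
    rw [hsum, h2]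
    ring
  have hq : sqMinv cL Minv (scatOp T M Atinv α μ)
      = sqMinv cL Minv μ - 4 * ((starRingEnd ℂ α) * c).re := by
    unfold sqMinv
    rw [hminvS, hSapp, hfin]
    have hμ2 : μ (cL a) = M a (cL a) := by
      conv_lhs => rw [← hMinv_r μ]
    rw [← hμ2]
    simp only [Complex.sub_re, Complex.add_re, Complex.mul_re, Complex.conj_re,
      Complex.conj_im, Complex.re_ofNat, Complex.im_ofNat]
    ring
  rw [hq]
  have hnn : 0 ≤ ((starRingEnd ℂ α) * c).re := by
    rcases hA7 with ⟨hα1, _, _, hAnn⟩ | ⟨hαI, A0, A1, A2, hAdec, h0, h1, h2⟩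
    · rw [hα1]; simpa using (hAnn w).2
    · rw [hαI, hc, hAdec]
      simp only [ContinuousLinearMap.sub_apply, ContinuousLinearMap.add_apply,
        ContinuousLinearMap.smul_apply, smul_eq_mul, Complex.conj_I]
      have e0 := (h0.2.2 w).1
      have e1 := (h1.2.2 w).2
      have e2 := (h2.2.2 w).1
      simp only [Complex.mul_re, Complex.neg_re, Complex.neg_im, Complex.I_re,
        Complex.I_im, Complex.sub_re, Complex.add_re, Complex.sub_im, Complex.add_im,
        Complex.mul_im]
      nlinarith [e0, e1, e2]
  linarith

section H4
variable {Lam : Type*} [NormedAddCommGroup Lam] [NormedSpace ℂ Lam]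
  (cL : Lam →SL[starRingEnd ℂ] Lam) (M : Lam →L[ℂ] (Lam →L[ℂ] ℂ))
  (Minv : (Lam →L[ℂ] ℂ) →L[ℂ] Lam) (X : Lam →L[ℂ] Lam)

lemma trX_M (hX2 : X.comp X = ContinuousLinearMap.id ℂ Lam)
    (hA4 : (trOp X).comp (M.comp X) = M) (b : Lam) :
    trOp X (M b) = M (X b) := by
  have h1 : X (X b) = b := ContinuousLinearMap.ext_iff.mp hX2 b
  have h2 : trOp X (M (X (X b))) = M (X b) := ContinuousLinearMap.ext_iff.mp hA4 (X b)
  rwa [h1] at h2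

lemma sqMinv_trX (hXreal : ∀ l, X (cL l) = cL (X l))
    (hX2 : X.comp X = ContinuousLinearMap.id ℂ Lam)
    (hA4 : (trOp X).comp (M.comp X) = M)
    (hMinv_l : ∀ l, Minv (M l) = l) (hMinv_r : ∀ ν, M (Minv ν) = ν)
    (ν : Lam →L[ℂ] ℂ) :
    sqMinv cL Minv (trOp X ν) = sqMinv cL Minv ν := by
  have key : trOp X ν = M (X (Minv ν)) := by
    conv_lhs => rw [← hMinv_r ν]
    exact trX_M M X hX2 hA4 (Minv ν)
  unfold sqMinv
  rw [key, hMinv_l]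
  have h4 : trOp X (M (X (Minv ν))) = M (Minv ν) :=
    ContinuousLinearMap.ext_iff.mp hA4 (Minv ν)
  have h3 : M (X (Minv ν)) (cL (X (Minv ν))) = M (Minv ν) (cL (Minv ν)) := by
    rw [← hXreal (Minv ν)]
    exact congrArg (fun g : Lam →L[ℂ] ℂ => g (cL (Minv ν))) h4
  rw [h3]
  have h5 : ν (cL (Minv ν)) = M (Minv ν) (cL (Minv ν)) :=
    (congrArg (fun g : Lam →L[ℂ] ℂ => g (cL (Minv ν))) (hMinv_r ν)).symm
  rw [h5]
end H4


set_option maxHeartbeats 2000000 in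
set_option synthInstance.maxHeartbeats 400000 in
/-- linear convergence with surjective traces: with `λ` the solution of
`(I − X^⊤S)λ = d` and `γ > 0` an inf-sup constant, the damped Robin–Schwarz iterates with
`β ∈ (0, 1)` converge linearly with rate `ρ = √(1 − β(1 − β)γ²) < 1`, and the primal
iterates converge linearly to `R û`. -/
theorem statement17
    {Uhat U Lam : Type*}
    [NormedAddCommGroup Uhat] [InnerProductSpace ℂ Uhat] [CompleteSpace Uhat]
    [NormedAddCommGroup U] [InnerProductSpace ℂ U] [CompleteSpace U]
    [NormedAddCommGroup Lam] [InnerProductSpace ℂ Lam] [CompleteSpace Lam]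
    (cUhat : Uhat →SL[starRingEnd ℂ] Uhat) (cU : U →SL[starRingEnd ℂ] U)
    (cL : Lam →SL[starRingEnd ℂ] Lam)
    (hcUhat : ∀ v, cUhat (cUhat v) = v) (hcU : ∀ v, cU (cU v) = v)
    (hcL : ∀ l, cL (cL l) = l)
    (hcUhat_iso : ∀ v, ‖cUhat v‖ = ‖v‖) (hcU_iso : ∀ v, ‖cU v‖ = ‖v‖)
    (hcL_iso : ∀ l, ‖cL l‖ = ‖l‖)
    (R : Uhat →L[ℂ] U) (T : U →L[ℂ] Lam) (X : Lam →L[ℂ] Lam)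
    (hRreal : ∀ v, R (cUhat v) = cU (R v))
    (hTreal : ∀ v, T (cU v) = cL (T v))
    -- Assumption AXR
    (hXreal : ∀ l, X (cL l) = cL (X l))
    -- Assumption A1
    (hRinj : LinearMap.ker (R : Uhat →ₗ[ℂ] U) = ⊥)
    (hRclosed : IsClosed (Set.range R))
    -- Assumption A2
    (hX2 : X.comp X = ContinuousLinearMap.id ℂ Lam)
    (hA2 : LinearMap.range (R : Uhat →ₗ[ℂ] U) = LinearMap.ker ((ContinuousLinearMap.id ℂ Lam - X).comp T : U →ₗ[ℂ] Lam))
    (A : U →L[ℂ] (U →L[ℂ] ℂ)) (f : U →L[ℂ] ℂ)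
    -- `Â = R^⊤ A R` bijective with bounded inverse
    (Ahatinv : (Uhat →L[ℂ] ℂ) →L[ℂ] Uhat)
    (hAhat_left : ∀ uhat : Uhat, Ahatinv (trOp R (A (R uhat))) = uhat)
    (hAhat_right : ∀ g : Uhat →L[ℂ] ℂ, trOp R (A (R (Ahatinv g))) = g)
    (α : ℂ) (hα : α ≠ 0)
    (M : Lam →L[ℂ] (Lam →L[ℂ] ℂ))
    -- Assumption A4
    (hA4 : (trOp X).comp (M.comp X) = M)
    -- Assumption A6 together with A3 (under A4)
    (hMreal : IsRealForm cL M) (hMsym : IsSymForm M)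
    (cM : ℝ) (hcM : 0 < cM)
    (hMlow : ∀ l : Lam, (M l (cL l)).im = 0 ∧ cM * ‖l‖ ^ 2 ≤ (M l (cL l)).re)
    (Minv : (Lam →L[ℂ] ℂ) →L[ℂ] Lam)
    (hMinv_l : ∀ l : Lam, Minv (M l) = l) (hMinv_r : ∀ μ : Lam →L[ℂ] ℂ, M (Minv μ) = μ)
    -- Assumption A5
    (Atinv : (U →L[ℂ] ℂ) →L[ℂ] U)
    (hAt_l : ∀ u : U, Atinv ((A + α • ((trOp T).comp (M.comp T))) u) = u)
    (hAt_r : ∀ g : U →L[ℂ] ℂ, (A + α • ((trOp T).comp (M.comp T))) (Atinv g) = g)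
    -- Assumption A7
    (hA7 : AssumptionA7 α cU A)
    -- surjectivity of the trace operator
    (hTsurj : LinearMap.range (T : U →ₗ[ℂ] Lam) = ⊤)
    -- `û` is the solution of `Â û = f̂`
    (uhat : Uhat) (huhat : trOp R (A (R uhat)) = trOp R f)
    -- the inf-sup constant
    (γ : ℝ) (hγ : 0 < γ)
    (hinfsup : ∀ μ : Lam →L[ℂ] ℂ,
      γ * Real.sqrt (sqMinv cL Minv μ) ≤
        Real.sqrt (sqMinv cL Minv (μ - trOp X (scatOp T M Atinv α μ))))
    -- `λ` solves the Schur complement equation `(I − X^⊤S)λ = d`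
    (lamsol : Lam →L[ℂ] ℂ)
    (hlamsol : lamsol - trOp X (scatOp T M Atinv α lamsol) =
      (2 * α) • trOp X (M (T (Atinv f))))
    -- the damped Robin–Schwarz iteration, damping parameter β ∈ (0, 1)
    (β : ℝ) (hβ0 : 0 < β) (hβ1 : β < 1)
    (lam : ℕ → (Lam →L[ℂ] ℂ))
    (hiter : ∀ n : ℕ, lam (n + 1) = lam n + (β : ℂ) •
      ((2 * α) • trOp X (M (T (Atinv f))) -
        (lam n - trOp X (scatOp T M Atinv α (lam n))))) :
    Real.sqrt (1 - β * (1 - β) * γ ^ 2) < 1 ∧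
    (∀ n : ℕ,
      Real.sqrt (sqMinv cL Minv (lam (n + 1) - lamsol)) ≤
        Real.sqrt (1 - β * (1 - β) * γ ^ 2) *
          Real.sqrt (sqMinv cL Minv (lam n - lamsol))) ∧
    (∀ n : ℕ,
      Real.sqrt (sqMinv cL Minv (lam n - lamsol)) ≤
        Real.sqrt (1 - β * (1 - β) * γ ^ 2) ^ n *
          Real.sqrt (sqMinv cL Minv (lam 0 - lamsol))) ∧
    (∃ C : ℝ, ∀ n : ℕ,
      ‖Atinv (f + trOp T (lam n)) - R uhat‖ ≤
        C * Real.sqrt (1 - β * (1 - β) * γ ^ 2) ^ n *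
          Real.sqrt (sqMinv cL Minv (lam 0 - lamsol))) := by
  
  have hqnn : ∀ μ : Lam →L[ℂ] ℂ, 0 ≤ sqMinv cL Minv μ :=
    fun μ => sqMinv_nonneg cL M Minv cM hMlow hcM.le hMinv_r μ
  have hScon : ∀ μ : Lam →L[ℂ] ℂ,
      sqMinv cL Minv (trOp X (scatOp T M Atinv α μ)) ≤ sqMinv cL Minv μ := by
    intro μ
    rw [sqMinv_trX cL M Minv X hXreal hX2 hA4 hMinv_l hMinv_r]
    exact S_contract cU cL T hTreal A α M hMreal hMsym cM hcM.le hMlow Minv hMinv_l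
      hMinv_r Atinv hAt_r hA7 μ
  -- #### primal identification: `Atinv (f + T^⊤ lamsol) = R uhat`
  have hSlam : scatOp T M Atinv α lamsol
      = -lamsol + (2*α) • M (T (Atinv (trOp T lamsol))) := by
    rw [scatOp]
    rw [ContinuousLinearMap.add_apply, ContinuousLinearMap.neg_apply,
      ContinuousLinearMap.smul_apply]
    rfl
  have hstar2 : lamsol + trOp X lamsol
      = (2*α) • trOp X (M (T (Atinv (f + trOp T lamsol)))) := by
    have h := hlamsol
    rw [hSlam, map_add, map_neg, map_smul] at h
    have h2 : M (T (Atinv (f + trOp T lamsol)))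
        = M (T (Atinv f)) + M (T (Atinv (trOp T lamsol))) := by
      rw [map_add, map_add, map_add]
    rw [h2, map_add, smul_add, ← h]
    abel
  have htrXtrX : ∀ ν : Lam →L[ℂ] ℂ, trOp X (trOp X ν) = ν := by
    intro ν
    ext l
    show ν (X (X l)) = ν l
    rw [show X (X l) = l from ContinuousLinearMap.ext_iff.mp hX2 l]
  have h2α : (2*α : ℂ) ≠ 0 := mul_ne_zero two_ne_zero hα
  have hXfix : trOp X (M (T (Atinv (f + trOp T lamsol))))
      = M (T (Atinv (f + trOp T lamsol))) := by
    have h := congrArg (trOp X) hstar2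
    rw [map_add, htrXtrX, map_smul, htrXtrX] at h
    have h2 : (2*α) • trOp X (M (T (Atinv (f + trOp T lamsol))))
        = (2*α) • M (T (Atinv (f + trOp T lamsol))) := by
      rw [← hstar2, ← h]; abel
    exact smul_right_injective _ h2α h2
  have hXTu : X (T (Atinv (f + trOp T lamsol))) = T (Atinv (f + trOp T lamsol)) := by
    rw [trX_M M X hX2 hA4] at hXfix
    have h := congrArg Minv hXfix
    rwa [hMinv_l, hMinv_l] at h
  have hurange : Atinv (f + trOp T lamsol) ∈ LinearMap.range (R : Uhat →ₗ[ℂ] U) := by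
    rw [hA2, LinearMap.mem_ker]
    show ((ContinuousLinearMap.id ℂ Lam - X).comp T) (Atinv (f + trOp T lamsol)) = 0
    rw [ContinuousLinearMap.comp_apply, ContinuousLinearMap.sub_apply,
      ContinuousLinearMap.id_apply, hXTu, sub_self]
  obtain ⟨v, hv⟩ := hurange
  replace hv : R v = Atinv (f + trOp T lamsol) := hv
  have hfix_eval : ∀ l : Lam, X l = l →
      lamsol l = α * (M (T (Atinv (f + trOp T lamsol))) l) := by
    intro l hl
    have h := congrArg (fun ν : Lam →L[ℂ] ℂ => ν l) hstar2
    simp only [ContinuousLinearMap.add_apply, ContinuousLinearMap.smul_apply,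
      smul_eq_mul, trOp_apply] at h
    rw [hl] at h
    have h3 : (2:ℂ) * (lamsol l) = 2 * (α * M (T (Atinv (f + trOp T lamsol))) l) := by
      linear_combination h
    exact mul_left_cancel₀ two_ne_zero h3
  have hAu : trOp R (A (Atinv (f + trOp T lamsol))) = trOp R f := by
    ext vh
    show A (Atinv (f + trOp T lamsol)) (R vh) = f (R vh)
    have h := congrArg (fun g : U →L[ℂ] ℂ => g (R vh)) (hAt_r (f + trOp T lamsol))
    simp only [ContinuousLinearMap.add_apply, ContinuousLinearMap.smul_apply,
      ContinuousLinearMap.comp_apply, smul_eq_mul, trOp_apply] at h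
    have hfixl : X (T (R vh)) = T (R vh) := by
      have hmem : R vh ∈ LinearMap.range (R : Uhat →ₗ[ℂ] U) := LinearMap.mem_range.mpr ⟨vh, rfl⟩
      rw [hA2, LinearMap.mem_ker] at hmem
      have h0 : ((ContinuousLinearMap.id ℂ Lam - X).comp T) (R vh) = 0 := hmem
      rw [ContinuousLinearMap.comp_apply, ContinuousLinearMap.sub_apply,
        ContinuousLinearMap.id_apply] at h0
      exact (sub_eq_zero.mp h0).symm
    have heval := hfix_eval (T (R vh)) hfixl
    linear_combination h + heval
  have huR : Atinv (f + trOp T lamsol) = R uhat := by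
    have h1 : trOp R (A (R v)) = trOp R (A (R uhat)) := by
      rw [hv, hAu]
      exact huhat.symm
    have h2 := congrArg Ahatinv h1
    rw [hAhat_left, hAhat_left] at h2
    rw [← hv, h2]
  -- #### error recursion and contraction
  have herr : ∀ n : ℕ, lam (n + 1) - lamsol
      = (((1 - β : ℝ)) : ℂ) • (lam n - lamsol)
        + ((β : ℝ) : ℂ) • (trOp X (scatOp T M Atinv α (lam n - lamsol))) := by
    intro n
    rw [hiter n, ← hlamsol, map_sub, map_sub]
    push_cast
    module
  have hcontract : ∀ n : ℕ, sqMinv cL Minv (lam (n+1) - lamsol)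
      ≤ (1 - β * (1-β) * γ^2) * sqMinv cL Minv (lam n - lamsol) := by
    intro n
    rw [herr n, sqMinv_convex]
    have h1 : sqMinv cL Minv (trOp X (scatOp T M Atinv α (lam n - lamsol)))
        ≤ sqMinv cL Minv (lam n - lamsol) := hScon _
    have h2 : γ^2 * sqMinv cL Minv (lam n - lamsol)
        ≤ sqMinv cL Minv ((lam n - lamsol)
          - trOp X (scatOp T M Atinv α (lam n - lamsol))) := by
      have h3 := hinfsup (lam n - lamsol)
      have h4 : (γ * Real.sqrt (sqMinv cL Minv (lam n - lamsol)))^2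
          ≤ (Real.sqrt (sqMinv cL Minv ((lam n - lamsol)
            - trOp X (scatOp T M Atinv α (lam n - lamsol)))))^2 :=
        pow_le_pow_left₀ (by positivity) h3 2
      rwa [mul_pow, Real.sq_sqrt (hqnn _), Real.sq_sqrt (hqnn _)] at h4
    nlinarith [mul_le_mul_of_nonneg_left h1 hβ0.le,
      mul_le_mul_of_nonneg_left h2 (mul_nonneg hβ0.le (by linarith : (0:ℝ) ≤ 1-β)),
      hqnn (lam n - lamsol)]
  have hρlt : Real.sqrt (1 - β * (1 - β) * γ ^ 2) < 1 := by
    have hρ2lt : 1 - β*(1-β)*γ^2 < 1 := by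
      have hpos : 0 < β*(1-β)*γ^2 :=
        mul_pos (mul_pos hβ0 (by linarith)) (pow_pos hγ 2)
      linarith
    have h1 := Real.sqrt_lt_sqrt_iff_of_pos (x := 1 - β*(1-β)*γ^2) (y := (1:ℝ)) one_pos
    rw [Real.sqrt_one] at h1
    exact h1.mpr hρ2lt
  have hstep : ∀ n : ℕ, Real.sqrt (sqMinv cL Minv (lam (n + 1) - lamsol)) ≤
      Real.sqrt (1 - β * (1 - β) * γ ^ 2) * Real.sqrt (sqMinv cL Minv (lam n - lamsol)) := by
    intro n
    calc Real.sqrt (sqMinv cL Minv (lam (n + 1) - lamsol))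
        ≤ Real.sqrt ((1 - β * (1-β) * γ^2) * sqMinv cL Minv (lam n - lamsol)) :=
          Real.sqrt_le_sqrt (hcontract n)
      _ = Real.sqrt (1 - β * (1 - β) * γ ^ 2) * Real.sqrt (sqMinv cL Minv (lam n - lamsol)) :=
          Real.sqrt_mul' _ (hqnn _)
  have hgeo : ∀ n : ℕ, Real.sqrt (sqMinv cL Minv (lam n - lamsol)) ≤
      Real.sqrt (1 - β * (1 - β) * γ ^ 2) ^ n * Real.sqrt (sqMinv cL Minv (lam 0 - lamsol)) := by
    intro n
    induction n with
    | zero => simp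
    | succ n ih =>
      calc Real.sqrt (sqMinv cL Minv (lam (n+1) - lamsol))
          ≤ Real.sqrt (1 - β * (1 - β) * γ ^ 2) * Real.sqrt (sqMinv cL Minv (lam n - lamsol)) :=
            hstep n
        _ ≤ Real.sqrt (1 - β * (1 - β) * γ ^ 2) *
            (Real.sqrt (1 - β * (1 - β) * γ ^ 2) ^ n *
              Real.sqrt (sqMinv cL Minv (lam 0 - lamsol))) :=
            mul_le_mul_of_nonneg_left ih (Real.sqrt_nonneg _)
        _ = Real.sqrt (1 - β * (1 - β) * γ ^ 2) ^ (n+1) *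
            Real.sqrt (sqMinv cL Minv (lam 0 - lamsol)) := by ring
  -- #### primal error bound
  have hdiff : ∀ n : ℕ, Atinv (f + trOp T (lam n)) - R uhat
      = (Atinv.comp ((trOp T).comp M)) (Minv (lam n - lamsol)) := by
    intro n
    rw [← huR]
    have h1 : Atinv (f + trOp T (lam n)) - Atinv (f + trOp T lamsol)
        = Atinv (trOp T (lam n - lamsol)) := by
      rw [← map_sub]
      congr 1
      rw [map_sub]
      abel
    rw [h1]
    simp only [ContinuousLinearMap.comp_apply]
    rw [hMinv_r]
  have hnorm : ∀ μ : Lam →L[ℂ] ℂ, ‖Minv μ‖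
      ≤ Real.sqrt (sqMinv cL Minv μ) / Real.sqrt cM := by
    intro μ
    have h1 : cM * ‖Minv μ‖^2 ≤ sqMinv cL Minv μ := by
      rw [sqMinv_eq cL M Minv hMinv_r]
      exact (hMlow (Minv μ)).2
    have h2 : ‖Minv μ‖^2 ≤ sqMinv cL Minv μ / cM := by
      rw [le_div_iff₀ hcM]; linarith
    calc ‖Minv μ‖ = Real.sqrt (‖Minv μ‖^2) := (Real.sqrt_sq (norm_nonneg _)).symm
      _ ≤ Real.sqrt (sqMinv cL Minv μ / cM) := Real.sqrt_le_sqrt h2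
      _ = Real.sqrt (sqMinv cL Minv μ) / Real.sqrt cM := Real.sqrt_div (hqnn μ) cM
  refine ⟨hρlt, hstep, hgeo,
    ‖Atinv.comp ((trOp T).comp M)‖ / Real.sqrt cM, fun n => ?_⟩
  have hb : ‖Atinv (f + trOp T (lam n)) - R uhat‖
      ≤ ‖Atinv.comp ((trOp T).comp M)‖ *
        (Real.sqrt (sqMinv cL Minv (lam n - lamsol)) / Real.sqrt cM) := by
    rw [hdiff n]
    exact le_trans ((Atinv.comp ((trOp T).comp M)).le_opNorm _)
      (mul_le_mul_of_nonneg_left (hnorm _) (norm_nonneg _))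
  have h5 := mul_le_mul_of_nonneg_left (hgeo n)
    (by positivity : (0:ℝ) ≤ ‖Atinv.comp ((trOp T).comp M)‖ / Real.sqrt cM)
  calc ‖Atinv (f + trOp T (lam n)) - R uhat‖
      ≤ ‖Atinv.comp ((trOp T).comp M)‖ *
        (Real.sqrt (sqMinv cL Minv (lam n - lamsol)) / Real.sqrt cM) := hb
    _ = (‖Atinv.comp ((trOp T).comp M)‖ / Real.sqrt cM) *
        Real.sqrt (sqMinv cL Minv (lam n - lamsol)) := by ring
    _ ≤ (‖Atinv.comp ((trOp T).comp M)‖ / Real.sqrt cM) *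
        (Real.sqrt (1 - β * (1 - β) * γ ^ 2) ^ n *
          Real.sqrt (sqMinv cL Minv (lam 0 - lamsol))) := h5
    _ = ‖Atinv.comp ((trOp T).comp M)‖ / Real.sqrt cM *
        Real.sqrt (1 - β * (1 - β) * γ ^ 2) ^ n *
          Real.sqrt (sqMinv cL Minv (lam 0 - lamsol)) := by ring
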